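/- For any distribution Ω and observation function Obs, the canonical distribution can(Ω), obtained by removing all alphabets strictly contained in another alphabet of Ω, has no counter-example if and only if Ω has no counter-example: CED(can(Ω), Obs) = ∅ ⟺ CED(Ω, Obs) = ∅. -/

import Mathlib

open Classical in
/-- Projection of a trace onto a sub-alphabet. -/
noncomputable def proj {A : Type*} (s : Set A) : List A → List A
  | [] => []
  | a :: σ => if a ∈ s then a :: proj s σ else proj s σ

/-- A distribution of the alphabet `A`: a family of sub-alphabets covering `A`. -/
def AlphabetDistribution {A : Type*} (Ω : Set (Set A)) : Prop := ⋃₀ Ω = Set.univ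

/-- A language agrees with an observation function (`L ⊨ Obs`). -/
def Agrees {A : Type*} (L : Set (List A)) (Obs : List A → Option Bool) : Prop :=
  ∀ σ b, Obs σ = some b → (σ ∈ L ↔ b = true)

/-- `L` is a product language over the distribution `Ω`: it is the parallel
composition of a family of languages over the component alphabets. -/
def ProductLang {A : Type*} (Ω : Set (Set A)) (L : Set (List A)) : Prop :=
  ∃ Ls : Set A → Set (List A),
    (∀ s ∈ Ω, ∀ σ ∈ Ls s, ∀ a ∈ σ, a ∈ s) ∧
    L = {σ | ∀ s ∈ Ω, proj s σ ∈ Ls s}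

/-- `Ω ⊨ Obs`: some product language over `Ω` agrees with `Obs`. -/
def Models {A : Type*} (Ω : Set (Set A)) (Obs : List A → Option Bool) : Prop :=
  ∃ L, ProductLang Ω L ∧ Agrees L Obs

/-- A counter-example to `Ω ⊨ Obs`: a negative observation `σN` together with,
for each component alphabet, a positive observation with matching projection. -/
def IsCED {A : Type*} (Ω : Set (Set A)) (Obs : List A → Option Bool)
    (σN : List A) (P : Set A → List A) : Prop :=
  Obs σN = some false ∧
  ∀ s ∈ Ω, Obs (P s) = some true ∧ proj s σN = proj s (P s)

/-- The connectivity preorder: `Ω` is less connecting than `Ω'`. -/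
def lessConn {A : Type*} (Ω Ω' : Set (Set A)) : Prop :=
  ∀ s ∈ Ω, ∃ t ∈ Ω', s ⊆ t

/-- The canonical distribution: remove all alphabets strictly contained in another. -/
def canon {A : Type*} (Ω : Set (Set A)) : Set (Set A) :=
  Ω \ {s ∈ Ω | ∃ t ∈ Ω, s ⊂ t}


lemma proj_proj {A : Type*} {s t : Set A} (hst : s ⊆ t) :
    ∀ σ : List A, proj s (proj t σ) = proj s σ := by
  intro σ
  induction σ with
  | nil => simp [proj]
  | cons a σ ih =>
    by_cases hat : a ∈ t
    · by_cases has : a ∈ s <;> simp [proj, hat, has, ih]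
    · have has : a ∉ s := fun h => hat (hst h)
      simp [proj, hat, has, ih]

lemma exists_maximal_canon {A : Type*} {Ω : Set (Set A)} (hfin : Ω.Finite)
    {s : Set A} (hs : s ∈ Ω) : ∃ t ∈ canon Ω, s ⊆ t := by
  have hS : ({t ∈ Ω | s ⊆ t} : Set (Set A)).Finite := hfin.subset (fun x hx => hx.1)
  obtain ⟨t, ht, hmax⟩ := Set.Finite.exists_maximalFor id _ hS ⟨s, hs, subset_rfl⟩
  refine ⟨t, ⟨ht.1, ?_⟩, ht.2⟩
  rintro ⟨-, t', ht', htt'⟩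
  exact htt'.ne (le_antisymm htt'.subset (hmax ⟨ht', ht.2.trans htt'.subset⟩ htt'.subset))

/-- The canonical distribution has no counter-example iff the original has none. -/
theorem canon_ced_empty_iff {A : Type*} (Ω : Set (Set A)) (hΩ : AlphabetDistribution Ω)
    (hfinΩ : Ω.Finite) (Obs : List A → Option Bool) :
    (¬ ∃ (σN : List A) (P : Set A → List A), IsCED (canon Ω) Obs σN P) ↔
      (¬ ∃ (σN : List A) (P : Set A → List A), IsCED Ω Obs σN P) := by
  have key : (∃ (σN : List A) (P : Set A → List A), IsCED (canon Ω) Obs σN P) ↔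
      (∃ (σN : List A) (P : Set A → List A), IsCED Ω Obs σN P) := by
    constructor
    · rintro ⟨σN, P, hneg, hpos⟩
      classical
      refine ⟨σN, fun s => if h : s ∈ Ω then P (exists_maximal_canon hfinΩ h).choose
        else [], hneg, fun s hs => ?_⟩
      obtain ⟨ht, hst⟩ := (exists_maximal_canon hfinΩ hs).choose_spec
      set t := (exists_maximal_canon hfinΩ hs).choose
      obtain ⟨hO, hp⟩ := hpos t ht
      simp only [dif_pos hs]
      refine ⟨hO, ?_⟩
      calc proj s σN = proj s (proj t σN) := (proj_proj hst σN).symm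
        _ = proj s (proj t (P t)) := by rw [hp]
        _ = proj s (P t) := proj_proj hst _
    · rintro ⟨σN, P, hneg, hpos⟩
      exact ⟨σN, P, hneg, fun s hs => hpos s hs.1⟩
  exact not_congr key
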